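/- A topological space X is submaximal (every dense subset is open) if and only if X is both OHI (every dense subset of every nonempty open subspace has dense interior, equivalently every dense subset contains a dense open subset) and NODEC (every nowhere dense subset is closed). -/
import Mathlib


open Set

universe u

/-- A space is submaximal (every dense subset is open) iff it is OHI (every dense subset
includes a dense open subset) and NODEC (every nowhere dense subset is closed). -/
theorem stmt_2 {X : Type u} [TopologicalSpace X] :
    (∀ S : Set X, Dense S → IsOpen S) ↔
      ((∀ S : Set X, Dense S → ∃ U ⊆ S, IsOpen U ∧ Dense U) ∧
        (∀ S : Set X, IsNowhereDense S → IsClosed S)) := by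
  constructor
  · intro h
    refine ⟨fun S hS => ⟨S, subset_rfl, h S hS, hS⟩, fun S hS => ?_⟩
    have hint : interior S = ∅ := by
      have h1 := interior_mono (subset_closure (s := S))
      rw [hS] at h1
      exact eq_empty_of_subset_empty h1
    have : Dense Sᶜ := by
      rw [dense_iff_closure_eq, closure_compl, hint, compl_empty]
    exact isOpen_compl_iff.mp (h Sᶜ this)
  · rintro ⟨hOHI, hNODEC⟩ S hS
    obtain ⟨U, hUS, hUopen, hUdense⟩ := hOHI S hS
    have hUc : IsNowhereDense Uᶜ := by
      unfold IsNowhereDense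
      rw [hUopen.isClosed_compl.closure_eq, interior_compl,
        hUdense.closure_eq, compl_univ]
    have hSc : IsNowhereDense Sᶜ := by
      unfold IsNowhereDense at hUc ⊢
      exact eq_empty_of_subset_empty
        (hUc ▸ interior_mono (closure_mono (compl_subset_compl.mpr hUS)))
    exact isClosed_compl_iff.mp (hNODEC Sᶜ hSc)
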